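/- Let (E, ‖·‖_*) be a seminormed linear space and (e_n)_n a spreading sequence in E. Then the following are equivalent: (i) there exist n ∈ ℕ and a_1, …, a_n ∈ ℝ, not all zero, with ‖Σ_{i=1}^n a_i e_i‖_* = 0; (ii) ‖e_n − e_m‖_* = 0 for every n, m ∈ ℕ; (iii) ‖Σ_{i=1}^n a_i e_i‖_* = |Σ_{i=1}^n a_i| · ‖e_1‖_* for every n ∈ ℕ and a_1, …, a_n ∈ ℝ. -/

import Mathlib

/-- The sequence `(e n)` is spreading with respect to the seminorm `ρ`. -/
def IsSpreadingWith {E : Type*} [AddCommGroup E] [Module ℝ E]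
    (ρ : Seminorm ℝ E) (e : ℕ → E) : Prop :=
  ∀ (n : ℕ) (a : Fin n → ℝ) (f : Fin n → ℕ), StrictMono f →
    ρ (∑ i, a i • e (i : ℕ)) = ρ (∑ i, a i • e (f i))

private lemma rho_eq_of_sub_eq_zero {E : Type*} [AddCommGroup E] [Module ℝ E]
    (ρ : Seminorm ℝ E) {x y : E} (h : ρ (x - y) = 0) : ρ x = ρ y := by
  apply le_antisymm
  · have h1 := map_add_le_add ρ y (x - y)
    have e1 : y + (x - y) = x := by abel
    rw [e1, h] at h1; linarith
  · have h2 := map_add_le_add ρ x (y - x)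
    have e2 : x + (y - x) = y := by abel
    have h3 : ρ (y - x) = 0 := by
      rw [← neg_sub x y, map_neg_eq_map, h]
    rw [e2, h3] at h2; linarith

private lemma pair_eq {E : Type*} [AddCommGroup E] [Module ℝ E] (ρ : Seminorm ℝ E)
    (e : ℕ → E) (hspr : IsSpreadingWith ρ e) {p q : ℕ} (hpq : p < q) :
    ρ (e p - e q) = ρ (e 0 - e 1) := by
  have h := hspr 2 ![1, -1] ![p, q] ?_
  · simpa [Fin.sum_univ_two, sub_eq_add_neg] using h.symm
  · intro i j hij
    fin_cases i <;> fin_cases j <;> simp_all [Fin.lt_def]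

/-- From `ρ (e 0 - e 1) = 0`, all pairs. -/
private lemma all_pairs {E : Type*} [AddCommGroup E] [Module ℝ E] (ρ : Seminorm ℝ E)
    (e : ℕ → E) (hspr : IsSpreadingWith ρ e) (h01 : ρ (e 0 - e 1) = 0) :
    ∀ n m : ℕ, ρ (e n - e m) = 0 := by
  intro n m
  rcases lt_trichotomy n m with h | h | h
  · rw [pair_eq ρ e hspr h]; exact h01
  · simp [h]
  · rw [← neg_sub (e m) (e n), map_neg_eq_map, pair_eq ρ e hspr h]; exact h01

/-- For a spreading sequence `(e n)` in a seminormed linear space the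
following are equivalent: (i) some nontrivial finite linear combination has seminorm 0;
(ii) `ρ (e n - e m) = 0` for all `n, m`; (iii) `ρ (∑ a_i • e_i) = |∑ a_i| * ρ (e 0)`
for all finite coefficient sequences. -/
theorem statement6 {E : Type*} [AddCommGroup E] [Module ℝ E] (ρ : Seminorm ℝ E)
    (e : ℕ → E) (hspr : IsSpreadingWith ρ e) :
    ((∃ (n : ℕ) (a : Fin n → ℝ), (∃ i, a i ≠ 0) ∧ ρ (∑ i, a i • e (i : ℕ)) = 0) ↔
        (∀ n m : ℕ, ρ (e n - e m) = 0)) ∧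
    ((∀ n m : ℕ, ρ (e n - e m) = 0) ↔
        (∀ (n : ℕ) (a : Fin n → ℝ),
          ρ (∑ i, a i • e (i : ℕ)) = |∑ i, a i| * ρ (e 0))) := by
  constructor
  · constructor
    · rintro ⟨n, a, ⟨j, hj⟩, h0⟩
      -- two spreadings differing only at position j
      set f : Fin n → ℕ := fun i => 2 * i with hf
      set g : Fin n → ℕ := fun i => if i = j then 2 * (j : ℕ) + 1 else 2 * i with hg
      have hfmono : StrictMono f := by
        intro i i' hii'
        simp only [hf]
        omega
      have hgmono : StrictMono g := by
        intro i i' hii'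
        simp only [hg]
        have h1 : (i : ℕ) < i' := hii'
        by_cases hi : i = j <;> by_cases hi' : i' = j <;> simp [hi, hi']
        · omega
        · subst hi; omega
        · subst hi'; omega
        · omega
      have h1 : ρ (∑ i, a i • e (f i)) = 0 := by
        rw [← hspr n a f hfmono]; exact h0
      have h2 : ρ (∑ i, a i • e (g i)) = 0 := by
        rw [← hspr n a g hgmono]; exact h0
      -- difference of the two sums
      have hdiff : (∑ i, a i • e (f i)) - (∑ i, a i • e (g i))
          = a j • (e (2 * (j : ℕ)) - e (2 * (j : ℕ) + 1)) := by
        rw [← Finset.sum_sub_distrib]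
        rw [Finset.sum_eq_single j]
        · simp only [hf, hg, if_pos rfl, smul_sub]
        · intro i _ hij
          simp [hf, hg, hij]
        · intro h; exact absurd (Finset.mem_univ j) h
      have hρdiff : ρ (a j • (e (2 * (j : ℕ)) - e (2 * (j : ℕ) + 1))) = 0 := by
        rw [← hdiff]
        have hle := map_add_le_add ρ (∑ i, a i • e (f i)) (-(∑ i, a i • e (g i)))
        rw [map_neg_eq_map, h1, h2, ← sub_eq_add_neg] at hle
        exact le_antisymm (by linarith) (apply_nonneg ρ _)
      rw [map_smul_eq_mul, Real.norm_eq_abs] at hρdiff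
      have habs : |a j| ≠ 0 := abs_ne_zero.mpr hj
      have hzero : ρ (e (2 * (j : ℕ)) - e (2 * (j : ℕ) + 1)) = 0 :=
        (mul_eq_zero.mp hρdiff).resolve_left habs
      have h01 : ρ (e 0 - e 1) = 0 := by
        rw [← pair_eq ρ e hspr (by omega : 2 * (j : ℕ) < 2 * (j : ℕ) + 1)]
        exact hzero
      exact all_pairs ρ e hspr h01
    · intro h
      refine ⟨2, ![1, -1], ⟨0, by norm_num⟩, ?_⟩
      have := h 0 1
      simpa [Fin.sum_univ_two, sub_eq_add_neg] using this
  · constructor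
    · intro h n a
      have hsub : ρ ((∑ i, a i • e (i : ℕ)) - (∑ i, a i) • e 0) = 0 := by
        have heq : (∑ i, a i • e (i : ℕ)) - (∑ i, a i) • e 0
            = ∑ i, a i • (e (i : ℕ) - e 0) := by
          rw [Finset.sum_smul, ← Finset.sum_sub_distrib]
          simp [smul_sub]
        rw [heq]
        have hle : ρ (∑ i, a i • (e (i : ℕ) - e 0)) ≤ ∑ i, ρ (a i • (e (i : ℕ) - e 0)) :=
          Finset.le_sum_of_subadditive ρ (map_zero ρ).le (map_add_le_add ρ) _ _
        have hzero : ∀ i ∈ Finset.univ, ρ (a i • (e (i : ℕ) - e 0)) = 0 := by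
          intro i _
          rw [map_smul_eq_mul, h (i : ℕ) 0, mul_zero]
        rw [Finset.sum_eq_zero hzero] at hle
        exact le_antisymm hle (apply_nonneg ρ _)
      rw [rho_eq_of_sub_eq_zero ρ hsub, map_smul_eq_mul, Real.norm_eq_abs]
    · intro h
      apply all_pairs ρ e hspr
      have := h 2 ![1, -1]
      have hsum : (∑ i : Fin 2, (![1, -1] : Fin 2 → ℝ) i) = 0 := by
        simp [Fin.sum_univ_two]
      rw [hsum] at this
      simpa [Fin.sum_univ_two, sub_eq_add_neg] using this
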